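/- Let f, g be proper convex lower semicontinuous functions on a real Hilbert space H with zer(∂f+∂g) nonempty, and let (y^k), (x^k), (w^k) be generated by the inertial Douglas–Rachford iteration (2.5) with parameters satisfying 0 ≤ α_k ≤ α < 1, 0 < λ̲ ≤ λ_k ≤ λ̄ < 2 and Σ_k α_k‖w^k − w^{k−1}‖² < +∞. If moreover ∂f is uniformly monotone, i.e. there exists an increasing function φ : [0,+∞) → [0,+∞] with φ(t) = 0 only for t = 0 such that ⟨x − y, u − v⟩ ≥ φ(‖x − y‖) whenever u ∈ ∂f(x) and v ∈ ∂f(y), then zer(∂f+∂g) consists of a single point z, and both (y^k) and (x^k) converge strongly (in norm) to z. -/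

import Mathlib

open Filter Topology Pointwise
open scoped RealInnerProductSpace

noncomputable section

/-- `f` is proper, convex and lower semicontinuous (extended-real-valued). -/
def ProperConvexLSC {H : Type*} [NormedAddCommGroup H] [InnerProductSpace ℝ H]
    (f : H → EReal) : Prop :=
  (∀ x, f x ≠ ⊥) ∧ (∃ x, f x ≠ ⊤) ∧
    (∀ x y : H, ∀ a b : ℝ, 0 ≤ a → 0 ≤ b → a + b = 1 →
      f (a • x + b • y) ≤ (a : EReal) * f x + (b : EReal) * f y) ∧
    LowerSemicontinuous f

/-- The convex subdifferential `∂f(x)`. -/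
def subdiff {H : Type*} [NormedAddCommGroup H] [InnerProductSpace ℝ H]
    (f : H → EReal) (x : H) : Set H :=
  {w | ∀ z, f x + ((⟪w, z - x⟫ : ℝ) : EReal) ≤ f z}

/-- Weak convergence of a sequence in a Hilbert space. -/
def WeakTendsto {H : Type*} [NormedAddCommGroup H] [InnerProductSpace ℝ H]
    (x : ℕ → H) (l : H) : Prop :=
  ∀ z : H, Tendsto (fun k => ⟪x k, z⟫) atTop (𝓝 (⟪l, z⟫))

/-- `p` is the proximal point of parameter `γ` of `f` at `c`, i.e. the
minimizer of `z ↦ γ f(z) + (1/2)‖z - c‖²`. -/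
def IsProx {H : Type*} [NormedAddCommGroup H] [InnerProductSpace ℝ H]
    (γ : ℝ) (f : H → EReal) (c p : H) : Prop :=
  ∀ z, (γ : EReal) * f p + ((1 / 2 * ‖p - c‖ ^ 2 : ℝ) : EReal)
      ≤ (γ : EReal) * f z + ((1 / 2 * ‖z - c‖ ^ 2 : ℝ) : EReal)

theorem IDR_norm_exp {H : Type*} [NormedAddCommGroup H] [InnerProductSpace ℝ H]
    (lam : ℝ) (a s : H) : ‖a + lam • s‖^2 = ‖a‖^2 + 2*lam*⟪a,s⟫ + lam^2*‖s‖^2 := by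
  simp only [← real_inner_self_eq_norm_sq, inner_add_left, inner_add_right,
    real_inner_smul_left, real_inner_smul_right]
  linear_combination -lam * (real_inner_comm s a)

theorem IDR_inert_exp {H : Type*} [NormedAddCommGroup H] [InnerProductSpace ℝ H]
    (α : ℝ) (a b : H) : ‖a + α • (a - b)‖^2
    = (1+α)*‖a‖^2 - α*‖b‖^2 + α*(1+α)*‖a-b‖^2 := by
  simp only [← real_inner_self_eq_norm_sq, inner_add_left, inner_add_right,
    inner_sub_left, inner_sub_right, real_inner_smul_left, real_inner_smul_right]
  ring_nf

theorem IDR_key_ident {H : Type*} [NormedAddCommGroup H] [InnerProductSpace ℝ H]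
    (γ : ℝ) (u y x z v : H) :
    γ * ⟪x - z, ((2:ℝ)•y - u - x) + γ•v⟫ + γ * ⟪y - z, (u - y) - γ•v⟫
      = γ * (-‖x - y‖^2 - ⟪x - y, u - (z + γ•v)⟫) := by
  simp only [inner_sub_left, inner_sub_right, inner_add_left, inner_add_right,
    real_inner_smul_left, real_inner_smul_right, two_smul, ← real_inner_self_eq_norm_sq]
  linear_combination (-γ) * (real_inner_comm x y) + (-γ) * (real_inner_comm y z)
    + (-γ) * (real_inner_comm z x)

theorem IDR_prox_mem_subdiff {H : Type*} [NormedAddCommGroup H] [InnerProductSpace ℝ H]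
    (f : H → EReal) (hf : ProperConvexLSC f) {γ : ℝ} (hγ : 0 < γ)
    {c p : H} (hp : IsProx γ f c p) : γ⁻¹ • (c - p) ∈ subdiff f p := by
  obtain ⟨hbot, ⟨x₀, hx₀⟩, hconv, -⟩ := hf
  lift f x₀ to ℝ using ⟨hx₀, hbot x₀⟩ with r₀ hr₀
  have hpt : f p ≠ ⊤ := by
    intro htop
    have := hp x₀
    rw [htop, ← hr₀, EReal.mul_top_of_pos (by exact_mod_cast hγ), EReal.top_add_coe,
      ← EReal.coe_mul, ← EReal.coe_add] at this
    exact (EReal.coe_ne_top _) (top_le_iff.mp this)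
  lift f p to ℝ using ⟨hpt, hbot p⟩ with rp hrp
  intro z
  rcases eq_or_ne (f z) ⊤ with hz | hz
  · rw [hz]; exact le_top
  lift f z to ℝ using ⟨hz, hbot z⟩ with rz hrz
  have key : γ * rp - γ * rz ≤ ⟪p - c, z - p⟫ := by
    apply le_of_forall_pos_le_add
    intro ε hε
    set C := ‖z - p‖^2 with hC
    have hC0 : 0 ≤ C := by positivity
    obtain ⟨t, ht0, ht1, htε⟩ : ∃ t : ℝ, 0 < t ∧ t ≤ 1 ∧ t/2*C ≤ ε := by
      refine ⟨min 1 (ε/(C+1)), by positivity, min_le_left _ _, ?_⟩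
      have : ε/(C+1)*C ≤ ε := by rw [div_mul_eq_mul_div, div_le_iff₀ (by linarith)]; nlinarith
      nlinarith [min_le_right 1 (ε/(C+1))]
    have hcv := hconv p z (1-t) t (by linarith) ht0.le (by ring)
    rw [← hrp, ← hrz, ← EReal.coe_mul, ← EReal.coe_mul, ← EReal.coe_add] at hcv
    have hpx := hp ((1-t) • p + t • z)
    rw [← hrp] at hpx
    have hmul := mul_le_mul_of_nonneg_left hcv (by exact_mod_cast hγ.le : (0:EReal) ≤ (γ:ℝ))
    have hchain : (γ:EReal) * (rp:EReal) + ((1 / 2 * ‖p - c‖ ^ 2 : ℝ) : EReal)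
        ≤ (γ:EReal) * (((1-t)*rp + t*rz : ℝ) : EReal)
          + ((1 / 2 * ‖(1-t) • p + t • z - c‖ ^ 2 : ℝ) : EReal) :=
      le_trans hpx (add_le_add hmul le_rfl)
    rw [← EReal.coe_mul, ← EReal.coe_mul, ← EReal.coe_add, ← EReal.coe_add,
      EReal.coe_le_coe_iff] at hchain
    have hcomb : (1-t) • p + t • z - c = (p - c) + t • (z - p) := by
      rw [sub_smul, one_smul, smul_sub]; abel
    rw [hcomb, IDR_norm_exp t (p - c) (z - p)] at hchain
    have ht2 : γ * t * rp - γ * t * rz ≤ t * ⟪p - c, z - p⟫ + t^2/2 * C := by nlinarith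
    have hdiv : γ * rp - γ * rz ≤ ⟪p - c, z - p⟫ + t/2 * C := by
      have h4 : (γ * t * rp - γ * t * rz)/t ≤ (t * ⟪p - c, z - p⟫ + t^2/2 * C)/t :=
        div_le_div_of_nonneg_right ht2 ht0.le |>.trans_eq rfl
      calc γ * rp - γ * rz = (γ * t * rp - γ * t * rz)/t := by field_simp
        _ ≤ (t * ⟪p - c, z - p⟫ + t^2/2 * C)/t := h4
        _ = ⟪p - c, z - p⟫ + t/2 * C := by field_simp
    linarith
  have hsm : ⟪γ⁻¹ • (c - p), z - p⟫ = γ⁻¹ * ⟪c - p, z - p⟫ := real_inner_smul_left _ _ _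
  rw [← hrp, hsm, ← EReal.coe_add, EReal.coe_le_coe_iff]
  have hcp : ⟪c - p, z - p⟫ = -⟪p - c, z - p⟫ := by
    rw [← inner_neg_left]; congr 1; abel
  rw [hcp]
  have h2 : rp - rz ≤ γ⁻¹ * ⟪p - c, z - p⟫ := by
    have h3 := mul_le_mul_of_nonneg_left key (inv_nonneg.mpr hγ.le)
    have h5 : γ⁻¹ * (γ * rp - γ * rz) = rp - rz := by field_simp
    rw [h5] at h3; exact h3
  linarith

theorem IDR_subdiff_ne_top {H : Type*} [NormedAddCommGroup H] [InnerProductSpace ℝ H]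
    (f : H → EReal) (hne : ∃ x, f x ≠ ⊤) {a u : H} (hu : u ∈ subdiff f a) : f a ≠ ⊤ := by
  obtain ⟨x₀, hx₀⟩ := hne
  intro htop
  have := hu x₀
  rw [htop, EReal.top_add_coe] at this
  exact hx₀ (top_le_iff.mp this)

theorem IDR_subdiff_mono {H : Type*} [NormedAddCommGroup H] [InnerProductSpace ℝ H]
    (f : H → EReal) (hbot : ∀ x, f x ≠ ⊥) (hne : ∃ x, f x ≠ ⊤)
    {a b u v : H} (hu : u ∈ subdiff f a) (hv : v ∈ subdiff f b) : 0 ≤ ⟪a - b, u - v⟫ := by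
  have hat := IDR_subdiff_ne_top f hne hu
  have hbt := IDR_subdiff_ne_top f hne hv
  lift f a to ℝ using ⟨hat, hbot a⟩ with ra hra
  lift f b to ℝ using ⟨hbt, hbot b⟩ with rb hrb
  have h1 := hu b
  have h2 := hv a
  rw [← hra, ← hrb, ← EReal.coe_add, EReal.coe_le_coe_iff] at h1 h2
  have e1 : ⟪u, b - a⟫ = -⟪u, a - b⟫ := by rw [← inner_neg_right]; congr 1; abel
  have e2 : ⟪v, a - b⟫ = -⟪v, b - a⟫ := by rw [← inner_neg_right]; congr 1; abel
  have e3 : ⟪a - b, u - v⟫ = ⟪u, a - b⟫ - ⟪v, a - b⟫ := by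
    rw [real_inner_comm, inner_sub_left]
  linarith

theorem IDR_AA (h s d : ℕ → ℝ) (αb S : ℝ) (hαb0 : 0 ≤ αb) (hαb : αb < 1)
    (hh : ∀ k, 0 ≤ h k) (hs : ∀ k, 1 ≤ k → 0 ≤ s k) (hd : ∀ k, 1 ≤ k → 0 ≤ d k)
    (hrec : ∀ k, 1 ≤ k → h (k+1) - h k ≤ αb * max (h k - h (k-1)) 0 + s k - d k)
    (hS : ∀ N, (∑ k ∈ Finset.range N, s (k+1)) ≤ S) :
    Tendsto d atTop (𝓝 0) := by
  set δ : ℕ → ℝ := fun k => max (h k - h (k-1)) 0 with hδ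
  have hδ0 : ∀ k, 0 ≤ δ k := fun k => le_max_right _ _
  have hS0 : 0 ≤ S := le_trans (by simp) (hS 0)
  have hδrec : ∀ k, 1 ≤ k → δ (k+1) ≤ αb * δ k + s k := by
    intro k hk
    have h1 := hrec k hk
    have h2 : h (k+1) - h k ≤ αb * δ k + s k := by
      have := hd k hk; simp only [hδ]; linarith
    apply max_le
    · simpa using h2
    · have := hδ0 k; have := hs k hk; positivity
  set B : ℝ := (δ 1 + S)/(1-αb) with hB
  have hQ : ∀ N, (∑ j ∈ Finset.range N, δ (j+1)) ≤ B := by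
    intro N
    induction N with
    | zero =>
      simp only [Finset.range_zero, Finset.sum_empty, hB]
      apply div_nonneg (by linarith [hδ0 1]) (by linarith)
    | succ N ih =>
      rw [Finset.sum_range_succ' (fun j => δ (j+1)) N]
      have step : ∑ i ∈ Finset.range N, δ (i+1+1) ≤ αb * (∑ j ∈ Finset.range N, δ (j+1)) + S := by
        calc ∑ i ∈ Finset.range N, δ (i+1+1)
            ≤ ∑ i ∈ Finset.range N, (αb * δ (i+1) + s (i+1)) :=
              Finset.sum_le_sum (fun i _ => hδrec (i+1) (Nat.le_add_left 1 i))
          _ = αb * (∑ j ∈ Finset.range N, δ (j+1)) + ∑ i ∈ Finset.range N, s (i+1) := by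
              rw [Finset.sum_add_distrib, Finset.mul_sum]
          _ ≤ αb * (∑ j ∈ Finset.range N, δ (j+1)) + S := by
              have := hS N; linarith
      have hmul : αb * (∑ j ∈ Finset.range N, δ (j+1)) ≤ αb * B :=
        mul_le_mul_of_nonneg_left ih hαb0
      have hne : (1:ℝ) - αb ≠ 0 := by linarith
      have hBeq : αb * B + S + δ 1 = B := by
        rw [hB]
        field_simp
        ring
      linarith
  have hdsum : ∀ N, (∑ j ∈ Finset.range N, d (j+1)) ≤ αb * B + S + h 1 := by
    intro N
    have htel : ∑ j ∈ Finset.range N, (h (j+1) - h (j+2)) = h 1 - h (N+1) := by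
      have := Finset.sum_range_sub' (fun j => h (j+1)) N
      simpa using this
    have hdb : ∀ j ∈ Finset.range N, d (j+1) ≤ αb * δ (j+1) + s (j+1) + (h (j+1) - h (j+2)) := by
      intro j _
      have := hrec (j+1) (Nat.le_add_left 1 j)
      simp only [hδ, Nat.add_sub_cancel] at this ⊢
      linarith
    calc (∑ j ∈ Finset.range N, d (j+1))
        ≤ ∑ j ∈ Finset.range N, (αb * δ (j+1) + s (j+1) + (h (j+1) - h (j+2))) :=
          Finset.sum_le_sum hdb
      _ = αb * (∑ j ∈ Finset.range N, δ (j+1)) + (∑ j ∈ Finset.range N, s (j+1))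
          + (h 1 - h (N+1)) := by
          rw [Finset.sum_add_distrib, Finset.sum_add_distrib, Finset.mul_sum, htel]
      _ ≤ αb * B + S + h 1 := by
          have h1 := mul_le_mul_of_nonneg_left (hQ N) hαb0
          have h2 := hS N
          have h3 := hh (N+1)
          linarith
  have hsummable : Summable (fun j => d (j+1)) :=
    summable_of_sum_range_le (fun j => hd (j+1) (Nat.le_add_left 1 j)) hdsum
  have htends : Tendsto (fun j => d (j+1)) atTop (𝓝 0) := hsummable.tendsto_atTop_zero
  exact (tendsto_add_atTop_iff_nat 1).mp htends

set_option maxHeartbeats 1000000 in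
theorem inertial_DR_strong_convergence_of_uniformly_monotone
    {H : Type*} [NormedAddCommGroup H] [InnerProductSpace ℝ H] [CompleteSpace H]
    (f g : H → EReal) (hf : ProperConvexLSC f) (hg : ProperConvexLSC g)
    (γ : ℝ) (hγ : 0 < γ)
    (proxf proxg : H → H)
    (hproxf : ∀ c, IsProx γ f c (proxf c)) (hproxg : ∀ c, IsProx γ g c (proxg c))
    (hzer : ∃ x : H, ∃ u ∈ subdiff f x, ∃ v ∈ subdiff g x, u + v = 0)
    (α lam : ℕ → ℝ) (αbar llo lhi : ℝ)
    (hα : ∀ k, 0 ≤ α k ∧ α k ≤ αbar) (hαbar : αbar < 1)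
    (hllo : 0 < llo) (hlam : ∀ k, llo ≤ lam k ∧ lam k ≤ lhi) (hlhi : lhi < 2)
    (w y x : ℕ → H)
    (hy : ∀ k, 1 ≤ k → y k = proxg (w k + α k • (w k - w (k - 1))))
    (hx : ∀ k, 1 ≤ k → x k = proxf ((2 : ℝ) • y k - w k - α k • (w k - w (k - 1))))
    (hw : ∀ k, 1 ≤ k → w (k + 1) = w k + α k • (w k - w (k - 1)) + lam k • (x k - y k))
    (hsum : Summable fun k => α (k + 1) * ‖w (k + 1) - w k‖ ^ 2)
    (φ : ℝ → EReal) (hφmono : MonotoneOn φ (Set.Ici 0))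
    (hφ0 : φ 0 = 0) (hφnonneg : ∀ t, 0 ≤ t → 0 ≤ φ t)
    (hφvanish : ∀ t, 0 ≤ t → φ t = 0 → t = 0)
    (hunif : ∀ a b u v : H, u ∈ subdiff f a → v ∈ subdiff f b →
      φ ‖a - b‖ ≤ ((⟪a - b, u - v⟫ : ℝ) : EReal)) :
    ∃ z : H,
      {a : H | ∃ u ∈ subdiff f a, ∃ v ∈ subdiff g a, u + v = 0} = {z} ∧
      Tendsto (fun k => ‖y k - z‖) atTop (𝓝 0) ∧
      Tendsto (fun k => ‖x k - z‖) atTop (𝓝 0) := by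
  classical
  obtain ⟨z, ustar, hustar, vstar, hvstar, huv⟩ := hzer
  have hαb0 : 0 ≤ αbar := le_trans (hα 0).1 (hα 0).2
  have hαk1 : ∀ k, α k ≤ 1 := fun k => le_of_lt (lt_of_le_of_lt (hα k).2 hαbar)
  have hust : ustar = -vstar := eq_neg_of_add_eq_zero_left huv
  -- uniqueness of the zero
  have huniq : ∀ a : H, (∃ u ∈ subdiff f a, ∃ v ∈ subdiff g a, u + v = 0) → a = z := by
    rintro a ⟨u, hu, v, hv, huv'⟩
    have hmono := IDR_subdiff_mono g hg.1 hg.2.1 hv hvstar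
    have hphi := hunif a z u ustar hu hustar
    have hueq : u = -v := eq_neg_of_add_eq_zero_left huv'
    have hinner : ⟪a - z, u - ustar⟫ = -⟪a - z, v - vstar⟫ := by
      rw [hueq, hust, ← inner_neg_right]; congr 1; abel
    have hr : ⟪a - z, u - ustar⟫ ≤ (0:ℝ) := by rw [hinner]; linarith
    have hle : φ ‖a - z‖ ≤ ((0:ℝ):EReal) :=
      le_trans hphi (by exact_mod_cast hr)
    have h0 : φ ‖a - z‖ = 0 := le_antisymm (by exact_mod_cast hle) (hφnonneg _ (norm_nonneg _))
    have := hφvanish _ (norm_nonneg _) h0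
    exact sub_eq_zero.mp (norm_eq_zero.mp this)
  set wstar : H := z + γ • vstar with hwstar
  -- subgradients generated by the iteration
  have hsubf : ∀ k, 1 ≤ k →
      (γ⁻¹ • ((2:ℝ) • y k - (w k + α k • (w k - w (k-1))) - x k)) ∈ subdiff f (x k) := by
    intro k hk
    have h1 := IDR_prox_mem_subdiff f hf hγ (hproxf ((2:ℝ) • y k - w k - α k • (w k - w (k-1))))
    rw [← hx k hk] at h1
    have e : (2:ℝ) • y k - (w k + α k • (w k - w (k-1))) - x k
        = ((2:ℝ) • y k - w k - α k • (w k - w (k-1))) - x k := by abel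
    rw [e]; exact h1
  have hsubg : ∀ k, 1 ≤ k →
      (γ⁻¹ • ((w k + α k • (w k - w (k-1))) - y k)) ∈ subdiff g (y k) := by
    intro k hk
    have h1 := IDR_prox_mem_subdiff g hg hγ (hproxg (w k + α k • (w k - w (k-1))))
    rw [← hy k hk] at h1
    exact h1
  set cc : ℕ → ℝ := fun k =>
    ⟪x k - z, (γ⁻¹ • ((2:ℝ) • y k - (w k + α k • (w k - w (k-1))) - x k)) + vstar⟫ with hccdef
  have hccE : ∀ k, 1 ≤ k → φ ‖x k - z‖ ≤ ((cc k : ℝ) : EReal) := by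
    intro k hk
    have h1 := hunif (x k) z _ ustar (hsubf k hk) hustar
    have e : (γ⁻¹ • ((2:ℝ) • y k - (w k + α k • (w k - w (k-1))) - x k)) - ustar
        = (γ⁻¹ • ((2:ℝ) • y k - (w k + α k • (w k - w (k-1))) - x k)) + vstar := by
      rw [hust]; abel
    rw [e] at h1
    exact h1
  have hcc0 : ∀ k, 1 ≤ k → 0 ≤ cc k := by
    intro k hk
    have := le_trans (hφnonneg _ (norm_nonneg _)) (hccE k hk)
    exact_mod_cast this
  -- key inner product inequality
  have hkey : ∀ k, 1 ≤ k →
      ⟪(w k + α k • (w k - w (k-1))) - wstar, x k - y k⟫ ≤ -‖x k - y k‖^2 - γ * cc k := by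
    intro k hk
    have hee : 0 ≤ ⟪y k - z, (γ⁻¹ • ((w k + α k • (w k - w (k-1))) - y k)) - vstar⟫ :=
      IDR_subdiff_mono g hg.1 hg.2.1 (hsubg k hk) hvstar
    have id1 := IDR_key_ident γ (w k + α k • (w k - w (k-1))) (y k) (x k) z vstar
    have hc : ⟪x k - z, ((2:ℝ) • y k - (w k + α k • (w k - w (k-1))) - x k) + γ • vstar⟫
        = γ * cc k := by
      simp only [hccdef, inner_add_right, real_inner_smul_right]
      first
      | (field_simp; ring)
      | field_simp
    have he : ⟪y k - z, ((w k + α k • (w k - w (k-1))) - y k) - γ • vstar⟫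
        = γ * ⟪y k - z, (γ⁻¹ • ((w k + α k • (w k - w (k-1))) - y k)) - vstar⟫ := by
      simp only [inner_sub_right, real_inner_smul_right]
      first
      | (field_simp; ring)
      | field_simp
    rw [← hwstar, hc, he] at id1
    have hcancel : γ * cc k + γ * ⟪y k - z, (γ⁻¹ • ((w k + α k • (w k - w (k-1))) - y k)) - vstar⟫
        = -‖x k - y k‖^2 - ⟪x k - y k, (w k + α k • (w k - w (k-1))) - wstar⟫ := by
      apply mul_left_cancel₀ hγ.ne'
      linear_combination id1
    rw [real_inner_comm]
    linarith [mul_nonneg hγ.le hee]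
  -- the descent recursion
  set hseq : ℕ → ℝ := fun k => ‖w k - wstar‖^2 with hhdef
  set sseq : ℕ → ℝ := fun k => 2 * α k * ‖w k - w (k-1)‖^2 with hsdef
  set dseq : ℕ → ℝ := fun k => lam k * (2 - lam k) * ‖x k - y k‖^2 + 2 * lam k * (γ * cc k) with hddef
  have hlam0 : ∀ k, 0 < lam k := fun k => lt_of_lt_of_le hllo (hlam k).1
  have hlam2 : ∀ k, lam k < 2 := fun k => lt_of_le_of_lt (hlam k).2 hlhi
  have hrec : ∀ k, 1 ≤ k →
      hseq (k+1) - hseq k ≤ αbar * max (hseq k - hseq (k-1)) 0 + sseq k - dseq k := by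
    intro k hk
    have hwk := hw k hk
    have e1 : w (k+1) - wstar = ((w k + α k • (w k - w (k-1))) - wstar) + lam k • (x k - y k) := by
      rw [hwk]; abel
    have e2 : hseq (k+1) = ‖(w k + α k • (w k - w (k-1))) - wstar‖^2
        + 2 * lam k * ⟪(w k + α k • (w k - w (k-1))) - wstar, x k - y k⟫
        + (lam k)^2 * ‖x k - y k‖^2 := by
      show ‖w (k+1) - wstar‖^2 = _
      rw [e1, IDR_norm_exp]
    have e4 : (w k + α k • (w k - w (k-1))) - wstar
        = (w k - wstar) + α k • ((w k - wstar) - (w (k-1) - wstar)) := by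
      have e5 : (w k - wstar) - (w (k-1) - wstar) = w k - w (k-1) := by abel
      rw [e5]; abel
    have e3 : ‖(w k + α k • (w k - w (k-1))) - wstar‖^2
        = (1 + α k) * hseq k - α k * hseq (k-1) + α k * (1 + α k) * ‖w k - w (k-1)‖^2 := by
      show _ = (1 + α k) * ‖w k - wstar‖^2 - α k * ‖w (k-1) - wstar‖^2
        + α k * (1 + α k) * ‖w k - w (k-1)‖^2
      rw [e4, IDR_inert_exp]
      have e5 : (w k - wstar) - (w (k-1) - wstar) = w k - w (k-1) := by abel
      rw [e5]
    have hkey' := hkey k hk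
    have hl0 : (0:ℝ) ≤ 2 * lam k := by have := hlam0 k; linarith
    have hm := mul_le_mul_of_nonneg_left hkey' hl0
    have e6 : hseq (k+1) ≤ (1 + α k) * hseq k - α k * hseq (k-1)
        + α k * (1 + α k) * ‖w k - w (k-1)‖^2
        - lam k * (2 - lam k) * ‖x k - y k‖^2 - 2 * lam k * (γ * cc k) := by
      rw [e2, e3]
      have hr2 : 2 * lam k * (-‖x k - y k‖^2 - γ * cc k) + (lam k)^2 * ‖x k - y k‖^2
          = -(lam k * (2 - lam k) * ‖x k - y k‖^2) - 2 * lam k * (γ * cc k) := by ring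
      linarith [hm, hr2]
    have hα1 : α k * (1 + α k) * ‖w k - w (k-1)‖^2 ≤ sseq k := by
      simp only [hsdef]
      nlinarith [mul_nonneg (mul_nonneg (sub_nonneg.mpr (hαk1 k)) (hα k).1)
        (sq_nonneg ‖w k - w (k-1)‖)]
    have hα2 : α k * (hseq k - hseq (k-1)) ≤ αbar * max (hseq k - hseq (k-1)) 0 := by
      rcases le_total (hseq k - hseq (k-1)) 0 with h' | h'
      · have h1 : α k * (hseq k - hseq (k-1)) ≤ 0 := mul_nonpos_of_nonneg_of_nonpos (hα k).1 h'
        have h2 : 0 ≤ αbar * max (hseq k - hseq (k-1)) 0 :=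
          mul_nonneg hαb0 (le_max_right _ _)
        linarith
      · rw [max_eq_left h']
        exact mul_le_mul_of_nonneg_right (hα k).2 h'
    simp only [hddef]
    linarith [e6, hα1, hα2]
  -- summability bound for sseq
  set S : ℝ := 2 * (∑' k, α (k+1) * ‖w (k+1) - w k‖^2) with hSdef
  have hSb : ∀ N, (∑ k ∈ Finset.range N, sseq (k+1)) ≤ S := by
    intro N
    have e1 : ∀ k, sseq (k+1) = 2 * (α (k+1) * ‖w (k+1) - w k‖^2) := by
      intro k
      simp only [hsdef, Nat.add_sub_cancel]
      ring
    have h1 : (∑ k ∈ Finset.range N, α (k+1) * ‖w (k+1) - w k‖^2)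
        ≤ ∑' k, α (k+1) * ‖w (k+1) - w k‖^2 := by
      exact Summable.sum_le_tsum (Finset.range N)
        (fun i _ => mul_nonneg (hα (i+1)).1 (sq_nonneg _)) hsum
    calc (∑ k ∈ Finset.range N, sseq (k+1))
        = 2 * (∑ k ∈ Finset.range N, α (k+1) * ‖w (k+1) - w k‖^2) := by
          rw [Finset.mul_sum]; exact Finset.sum_congr rfl (fun k _ => e1 k)
      _ ≤ S := by rw [hSdef]; linarith
  have hhnn : ∀ k, 0 ≤ hseq k := fun k => sq_nonneg _
  have hsnn : ∀ k, 1 ≤ k → 0 ≤ sseq k := by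
    intro k _
    simp only [hsdef]
    have := (hα k).1
    positivity
  have hdnn : ∀ k, 1 ≤ k → 0 ≤ dseq k := by
    intro k hk
    simp only [hddef]
    have h1 := hlam0 k
    have h2 := hlam2 k
    have h3 := hcc0 k hk
    have h4 : 0 ≤ lam k * (2 - lam k) * ‖x k - y k‖^2 :=
      mul_nonneg (mul_nonneg h1.le (by linarith)) (sq_nonneg _)
    have h5 : 0 ≤ 2 * lam k * (γ * cc k) :=
      mul_nonneg (by linarith) (mul_nonneg hγ.le h3)
    linarith
  have htend : Tendsto dseq atTop (𝓝 0) :=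
    IDR_AA hseq sseq dseq αbar S hαb0 hαbar hhnn hsnn hdnn hrec hSb
  -- consequences: x k - y k → 0 and cc → 0
  have hm2 : 0 < llo * (2 - lhi) := by nlinarith
  have hsq : Tendsto (fun k => ‖x k - y k‖^2) atTop (𝓝 0) := by
    apply squeeze_zero' (g := fun k => (llo * (2 - lhi))⁻¹ * dseq k)
      (Filter.Eventually.of_forall (fun k => sq_nonneg _)) ?_ ?_
    · filter_upwards [eventually_ge_atTop 1] with k hk
      show ‖x k - y k‖^2 ≤ (llo * (2 - lhi))⁻¹ * dseq k
      have h1 := (hlam k).1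
      have h2 := (hlam k).2
      have h3 := hcc0 k hk
      have hA : 0 ≤ 2 * lam k * (γ * cc k) :=
        mul_nonneg (by linarith [hlam0 k]) (mul_nonneg hγ.le h3)
      have h5 : llo * (2 - lhi) ≤ lam k * (2 - lam k) := by
        nlinarith [mul_nonneg (sub_nonneg.mpr h1) (by linarith : (0:ℝ) ≤ 2 - lhi),
          mul_nonneg (hlam0 k).le (sub_nonneg.mpr h2)]
      have h4 : llo * (2 - lhi) * ‖x k - y k‖^2 ≤ dseq k := by
        simp only [hddef]
        nlinarith [mul_le_mul_of_nonneg_right h5 (sq_nonneg ‖x k - y k‖), hA]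
      rw [inv_mul_eq_div, le_div_iff₀ hm2]
      linarith [h4]
    · have := htend.const_mul (llo * (2 - lhi))⁻¹
      simpa using this
  have hxy : Tendsto (fun k => ‖x k - y k‖) atTop (𝓝 0) := by
    have h2 := (Real.continuous_sqrt.tendsto 0).comp hsq
    simp only [Function.comp_def] at h2
    have e : ∀ k, Real.sqrt (‖x k - y k‖^2) = ‖x k - y k‖ :=
      fun k => Real.sqrt_sq (norm_nonneg _)
    rw [Real.sqrt_zero] at h2
    exact h2.congr (fun k => e k)
  have hccto : Tendsto cc atTop (𝓝 0) := by
    apply squeeze_zero' (g := fun k => (2 * llo * γ)⁻¹ * dseq k) ?_ ?_ ?_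
    · filter_upwards [eventually_ge_atTop 1] with k hk
      exact hcc0 k hk
    · filter_upwards [eventually_ge_atTop 1] with k hk
      show cc k ≤ (2 * llo * γ)⁻¹ * dseq k
      have h1 := (hlam k).1
      have h2 := hlam2 k
      have h3 := hcc0 k hk
      have h6 : (0:ℝ) < 2 * llo * γ := by positivity
      have h4 : 2 * llo * γ * cc k ≤ dseq k := by
        simp only [hddef]
        have hB : 0 ≤ lam k * (2 - lam k) * ‖x k - y k‖^2 :=
          mul_nonneg (mul_nonneg (hlam0 k).le (by linarith)) (sq_nonneg _)
        nlinarith [hB,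
          mul_nonneg (mul_nonneg (by linarith : (0:ℝ) ≤ 2 * (lam k - llo)) hγ.le) h3]
      rw [inv_mul_eq_div, le_div_iff₀ h6]
      linarith [h4]
    · have := htend.const_mul (2 * llo * γ)⁻¹
      simpa using this
  -- strong convergence of x
  have hxz : Tendsto (fun k => ‖x k - z‖) atTop (𝓝 0) := by
    rw [Metric.tendsto_atTop]
    intro ε hε
    obtain ⟨r, hr0, hrφ⟩ : ∃ r : ℝ, 0 < r ∧ (r : EReal) ≤ φ ε := by
      rcases eq_or_ne (φ ε) ⊤ with ht | ht
      · exact ⟨1, one_pos, by rw [ht]; exact le_top⟩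
      · have hεnn : φ ε ≠ 0 := fun h0 => (ne_of_gt hε) (hφvanish ε hε.le h0)
        have hpos : (0:EReal) < φ ε := (hφnonneg ε hε.le).lt_of_ne (Ne.symm hεnn)
        have hb : φ ε ≠ ⊥ := ne_bot_of_gt hpos
        lift φ ε to ℝ using ⟨ht, hb⟩ with r hr
        exact ⟨r, by exact_mod_cast hpos, le_rfl⟩
    rw [Metric.tendsto_atTop] at hccto
    obtain ⟨N₁, hN₁⟩ := hccto r hr0
    refine ⟨max N₁ 1, fun k hk => ?_⟩
    have hk1 : 1 ≤ k := le_trans (le_max_right _ _) hk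
    have hkN : N₁ ≤ k := le_trans (le_max_left _ _) hk
    rw [Real.dist_eq, sub_zero, abs_of_nonneg (norm_nonneg _)]
    by_contra hcon
    push_neg at hcon
    have hmono2 : φ ε ≤ φ ‖x k - z‖ :=
      hφmono (Set.mem_Ici.mpr hε.le) (Set.mem_Ici.mpr (norm_nonneg _)) hcon
    have hchain : (r : EReal) ≤ ((cc k : ℝ) : EReal) :=
      le_trans hrφ (le_trans hmono2 (hccE k hk1))
    have hrcc : r ≤ cc k := by exact_mod_cast hchain
    have hdk := hN₁ k hkN
    rw [Real.dist_eq, sub_zero] at hdk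
    have hlt : cc k < r := lt_of_le_of_lt (le_abs_self _) hdk
    linarith
  -- strong convergence of y
  have hyz : Tendsto (fun k => ‖y k - z‖) atTop (𝓝 0) := by
    apply squeeze_zero (fun k => norm_nonneg _) (g := fun k => ‖x k - y k‖ + ‖x k - z‖) ?_ ?_
    · intro k
      have e : y k - z = (x k - z) - (x k - y k) := by abel
      rw [e]
      calc ‖(x k - z) - (x k - y k)‖ ≤ ‖x k - z‖ + ‖x k - y k‖ := norm_sub_le _ _
        _ = ‖x k - y k‖ + ‖x k - z‖ := by ring
    · have := hxy.add hxz
      simpa using this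
  refine ⟨z, ?_, hyz, hxz⟩
  ext a
  simp only [Set.mem_setOf_eq, Set.mem_singleton_iff]
  constructor
  · exact huniq a
  · rintro rfl
    exact ⟨ustar, hustar, vstar, hvstar, huv⟩
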